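/- Let 1 ≤ n ≤ m and let A_0,…,A_{2n−1} be 2^m × 2^m complex matrices that are self-adjoint and satisfy the Majorana anticommutation relations A_j A_k + A_k A_j = 2δ_{jk} I for all j,k ∈ {0,…,2n−1}. Let Γ_0,…,Γ_{2n−1} be the n-qubit Jordan–Wigner Majorana operators Γ_{2i} := Z^{⊗i} ⊗ X ⊗ I^{⊗(n−1−i)}, Γ_{2i+1} := Z^{⊗i} ⊗ Y ⊗ I^{⊗(n−1−i)}. Then there exists a linear isometry V : ℂ^{2^n} → ℂ^{2^m} (V† V = I_{2^n}) such that A_k V = V Γ_k for every k ∈ {0,…,2n−1}. (Hence any family of 2^m-dimensional qubit operators satisfying the Majorana relations is, on a 2^n-dimensional invariant subspace, unitarily equivalent to the Jordan–Wigner representation; this realizes the implication from a valid Pauli representation of the fermionic algebra to the existence of a fermion-qubit mapping.) -/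

import Mathlib

open Matrix Finset
open scoped symmDiff

namespace FQ

/-- Pauli X. -/
noncomputable def X : Matrix (ZMod 2) (ZMod 2) ℂ := !![0, 1; 1, 0]

/-- Pauli Y. -/
noncomputable def Y : Matrix (ZMod 2) (ZMod 2) ℂ := !![0, -Complex.I; Complex.I, 0]

/-- Pauli Z. -/
noncomputable def Z : Matrix (ZMod 2) (ZMod 2) ℂ := !![1, 0; 0, -1]

/-- Tensor product `M 0 ⊗ M 1 ⊗ ⋯ ⊗ M (n-1)` of a family of single-qubit operators, as a
`2^n × 2^n` matrix indexed by functions `Fin n → ZMod 2`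
(the identification of `(ℂ²)^⊗n` with `ℂ^(2^n)`). -/
noncomputable def tens {n : ℕ} (M : Fin n → Matrix (ZMod 2) (ZMod 2) ℂ) :
    Matrix (Fin n → ZMod 2) (Fin n → ZMod 2) ℂ :=
  Matrix.of fun f g => ∏ i, M i (f i) (g i)

/-- The `n`-qubit Jordan–Wigner Majorana operators:
`gamma n (2i) = Z^⊗i ⊗ X ⊗ I^⊗(n-1-i)` and `gamma n (2i+1) = Z^⊗i ⊗ Y ⊗ I^⊗(n-1-i)`. -/
noncomputable def gamma (n k : ℕ) : Matrix (Fin n → ZMod 2) (Fin n → ZMod 2) ℂ :=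
  tens fun j => if (j : ℕ) < k / 2 then Z
    else if (j : ℕ) = k / 2 then (if k % 2 = 0 then X else Y) else 1


section Aux
variable {m : ℕ}

noncomputable def fac (A : ℕ → Matrix (Fin m → ZMod 2) (Fin m → ZMod 2) ℂ)
    (t : ℕ → ZMod 2) (i : ℕ) : Matrix (Fin m → ZMod 2) (Fin m → ZMod 2) ℂ :=
  if t i = 1 then A (2*i) else 1

noncomputable def Qp (A : ℕ → Matrix (Fin m → ZMod 2) (Fin m → ZMod 2) ℂ)
    (t : ℕ → ZMod 2) : ℕ → Matrix (Fin m → ZMod 2) (Fin m → ZMod 2) ℂ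
  | 0 => 1
  | c+1 => Qp A t c * fac A t c

noncomputable def sg (t : ℕ → ZMod 2) (S : Finset ℕ) : ℂ :=
  ∏ i ∈ S, (if t i = 1 then -1 else 1)

lemma sg_mul_self (t : ℕ → ZMod 2) (S : Finset ℕ) : sg t S * sg t S = 1 := by
  unfold sg; rw [← Finset.prod_mul_distrib]
  apply Finset.prod_eq_one; intro i _; split <;> norm_num

lemma sg_split (t : ℕ → ZMod 2) {a c : ℕ} (h : a ≤ c) :
    sg t (Finset.range c) = sg t (Finset.range a) * sg t (Finset.Ico a c) := by
  unfold sg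
  rw [Finset.range_eq_Ico, ← Finset.prod_Ico_consecutive _ (Nat.zero_le a) h,
    ← Finset.range_eq_Ico]

lemma sg_succ (t : ℕ → ZMod 2) (j : ℕ) :
    sg t (Finset.range (j+1)) = sg t (Finset.range j) * (if t j = 1 then -1 else 1) :=
  Finset.prod_range_succ _ j

lemma sg_Ico_succ (t : ℕ → ZMod 2) {a c : ℕ} (h : a ≤ c) :
    sg t (Finset.Ico a (c+1)) = sg t (Finset.Ico a c) * (if t c = 1 then -1 else 1) :=
  Finset.prod_Ico_succ_top h _

def flipv (j : ℕ) (t : ℕ → ZMod 2) : ℕ → ZMod 2 := Function.update t j (t j + 1)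

lemma Qp_congr (A : ℕ → Matrix (Fin m → ZMod 2) (Fin m → ZMod 2) ℂ)
    {t u : ℕ → ZMod 2} : ∀ c, (∀ i, i < c → t i = u i) → Qp A t c = Qp A u c := by
  intro c
  induction c with
  | zero => intro _; rfl
  | succ c ih =>
    intro h
    show Qp A t c * fac A t c = Qp A u c * fac A u c
    rw [ih (fun i hi => h i (by omega)), fac, fac, h c (by omega)]

variable {n : ℕ} {A : ℕ → Matrix (Fin m → ZMod 2) (Fin m → ZMod 2) ℂ}
  (h1 : ∀ j, j < 2*n → A j * A j = 1)
  (h2 : ∀ j k, j < 2*n → k < 2*n → j ≠ k → A j * A k = -(A k * A j))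
  (h3 : ∀ k, k < 2*n → (A k)ᴴ = A k)

section
include h1 h2

/-- pass `A k` through the monomial, when `k` is not among its indices. -/
lemma A_pass (t : ℕ → ZMod 2) {k : ℕ} (hk : k < 2*n) :
    ∀ c, c ≤ n → (∀ i, i < c → k ≠ 2*i) →
      A k * Qp A t c = sg t (Finset.range c) • (Qp A t c * A k) := by
  intro c
  induction c with
  | zero =>
    intro _ _
    simp [Qp, sg]
  | succ c ih =>
    intro hc hne
    have hcn : c < n := by omega
    have h2c : 2*c < 2*n := by omega
    show A k * (Qp A t c * fac A t c) = _ • (Qp A t c * fac A t c * A k)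
    rw [← mul_assoc, ih (by omega) (fun i hi => hne i (by omega)), smul_mul_assoc,
      mul_assoc]
    have hfac : A k * fac A t c = (if t c = 1 then (-1 : ℂ) else 1) • (fac A t c * A k) := by
      by_cases h : t c = 1
      · simp only [fac, if_pos h]
        rw [h2 k (2*c) hk h2c (hne c (by omega))]
        simp
      · simp only [fac, if_neg h]
        simp
    rw [hfac, mul_smul_comm, smul_smul, sg_succ, ← mul_assoc]

/-- `A (2j)` flipped through from the left. -/
lemma A_flip_left (t : ℕ → ZMod 2) {j : ℕ} (hj : j < n) :
    ∀ c, j < c → c ≤ n →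
      A (2*j) * Qp A t c = sg t (Finset.range j) • Qp A (flipv j t) c := by
  intro c hjc hcn
  induction c, hjc using Nat.le_induction with
  | base =>
    have hp := A_pass h1 h2 t (show 2*j < 2*n by omega) j (le_of_lt hj)
      (fun i hi => by omega)
    show A (2*j) * (Qp A t j * fac A t j) = _ • (Qp A (flipv j t) j * fac A (flipv j t) j)
    rw [← mul_assoc, hp, smul_mul_assoc, mul_assoc]
    have hQ : Qp A t j = Qp A (flipv j t) j := by
      apply Qp_congr
      intro i hi
      simp [flipv, Function.update_of_ne (by omega : i ≠ j)]
    have hf : A (2*j) * fac A t j = fac A (flipv j t) j := by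
      have hflip : flipv j t j = t j + 1 := by simp [flipv]
      by_cases h : t j = 1
      · have : flipv j t j ≠ 1 := by rw [hflip, h]; decide
        simp only [fac, if_pos h, if_neg this]
        exact h1 (2*j) (by omega)
      · have ht0 : t j = 0 := by
          have : ∀ a : ZMod 2, a ≠ 1 → a = 0 := by decide
          exact this _ h
        have : flipv j t j = 1 := by rw [hflip, ht0]; decide
        simp only [fac, if_neg h, if_pos this, mul_one]
    rw [hf, hQ]
  | succ c hc ih =>
    have hcn' : c ≤ n := by omega
    show A (2*j) * (Qp A t c * fac A t c) = _ • (Qp A (flipv j t) c * fac A (flipv j t) c)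
    rw [← mul_assoc, ih hcn', smul_mul_assoc]
    congr 2
    simp [fac, flipv, Function.update_of_ne (by omega : c ≠ j)]

/-- `A (2j)` flipped through from the right. -/
lemma A_flip_right (t : ℕ → ZMod 2) {j : ℕ} (hj : j < n) :
    ∀ c, j < c → c ≤ n →
      Qp A t c * A (2*j) = sg t (Finset.Ico (j+1) c) • Qp A (flipv j t) c := by
  intro c hjc hcn
  induction c, hjc using Nat.le_induction with
  | base =>
    have hQ : Qp A t j = Qp A (flipv j t) j := by
      apply Qp_congr
      intro i hi
      simp [flipv, Function.update_of_ne (by omega : i ≠ j)]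
    have hf : fac A t j * A (2*j) = fac A (flipv j t) j := by
      have hflip : flipv j t j = t j + 1 := by simp [flipv]
      by_cases h : t j = 1
      · have : flipv j t j ≠ 1 := by rw [hflip, h]; decide
        simp only [fac, if_pos h, if_neg this]
        exact h1 (2*j) (by omega)
      · have ht0 : t j = 0 := by
          have : ∀ a : ZMod 2, a ≠ 1 → a = 0 := by decide
          exact this _ h
        have : flipv j t j = 1 := by rw [hflip, ht0]; decide
        simp only [fac, if_neg h, if_pos this, one_mul]
    show Qp A t j * fac A t j * A (2*j) = _ • (Qp A (flipv j t) j * fac A (flipv j t) j)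
    rw [mul_assoc, hf, hQ]
    simp [sg]
  | succ c hc ih =>
    have hcn' : c ≤ n := by omega
    have hfc : fac A t c * A (2*j) =
        (if t c = 1 then (-1 : ℂ) else 1) • (A (2*j) * fac A t c) := by
      by_cases h : t c = 1
      · simp only [fac, if_pos h]
        rw [h2 (2*c) (2*j) (by omega) (by omega) (by omega)]
        simp
      · simp only [fac, if_neg h]; simp
    have hfe : fac A t c = fac A (flipv j t) c := by
      simp [fac, flipv, Function.update_of_ne (by omega : c ≠ j)]
    show Qp A t c * fac A t c * A (2*j) = _ • (Qp A (flipv j t) c * fac A (flipv j t) c)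
    rw [mul_assoc, hfc, mul_smul_comm, ← mul_assoc, ih hcn', smul_mul_assoc, smul_smul,
      sg_Ico_succ t (by omega : j + 1 ≤ c), mul_comm (sg t (Finset.Ico (j+1) c)), hfe]

end

/-- `B_j = i A_{2j} A_{2j+1}`. -/
noncomputable def Bop (A : ℕ → Matrix (Fin m → ZMod 2) (Fin m → ZMod 2) ℂ) (j : ℕ) :
    Matrix (Fin m → ZMod 2) (Fin m → ZMod 2) ℂ :=
  Complex.I • (A (2*j) * A (2*j+1))

/-- the product of the projections `(1 - B_j)/2`, `j < c`. -/
noncomputable def Pr (A : ℕ → Matrix (Fin m → ZMod 2) (Fin m → ZMod 2) ℂ) :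
    ℕ → Matrix (Fin m → ZMod 2) (Fin m → ZMod 2) ℂ
  | 0 => 1
  | c+1 => Pr A c * ((2:ℂ)⁻¹ • (1 - Bop A c))

set_option linter.unusedSectionVars false

section
include h1 h2 h3

lemma fac_herm (t : ℕ → ZMod 2) {c : ℕ} (hc : c < n) : (fac A t c)ᴴ = fac A t c := by
  unfold fac
  split
  · exact h3 _ (by omega)
  · simp

lemma Qp_adj_mul_self (t : ℕ → ZMod 2) :
    ∀ c, c ≤ n → (Qp A t c)ᴴ * Qp A t c = 1 := by
  intro c
  induction c with
  | zero => intro _; simp [Qp]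
  | succ c ih =>
    intro hc
    show (Qp A t c * fac A t c)ᴴ * (Qp A t c * fac A t c) = 1
    rw [conjTranspose_mul, fac_herm h1 h2 h3 t (by omega : c < n)]
    have hmid : (Qp A t c)ᴴ * (Qp A t c * fac A t c) = fac A t c := by
      rw [← mul_assoc, ih (by omega), one_mul]
    rw [mul_assoc, hmid]
    by_cases h : t c = 1
    · simp only [fac, if_pos h]
      exact h1 _ (by omega)
    · simp [fac, if_neg h]

lemma fac_mul_fac (t u : ℕ → ZMod 2) {c : ℕ}
    (hc : c < n) : fac A t c * fac A u c = fac A (fun i => t i + u i) c := by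
  have hz : ∀ a : ZMod 2, a ≠ 1 → a = 0 := by decide
  by_cases h : t c = 1 <;> by_cases h' : u c = 1
  · simp only [fac, if_pos h, if_pos h']
    rw [h1 _ (by omega)]
    have : t c + u c ≠ 1 := by rw [h, h']; decide
    simp [this]
  · simp only [fac, if_pos h, if_neg h', mul_one]
    have : t c + u c = 1 := by rw [h, hz _ h']; decide
    simp [this]
  · simp only [fac, if_neg h, if_pos h', one_mul]
    have : t c + u c = 1 := by rw [h', hz _ h]; decide
    simp [this]
  · simp only [fac, if_neg h, if_neg h', one_mul]
    have : t c + u c ≠ 1 := by rw [hz _ h, hz _ h']; decide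
    simp [this]

lemma Qp_adj_mul (t u : ℕ → ZMod 2) :
    ∀ c, c ≤ n → ∃ σ : ℂ, σ * σ = 1 ∧
      (Qp A t c)ᴴ * Qp A u c = σ • Qp A (fun i => t i + u i) c := by
  intro c
  induction c with
  | zero => intro _; exact ⟨1, by norm_num, by simp [Qp]⟩
  | succ c ih =>
    intro hc
    obtain ⟨σ, hσ, hQ⟩ := ih (by omega)
    set w : ℕ → ZMod 2 := fun i => t i + u i with hw
    set τ : ℂ := if t c = 1 then sg w (Finset.range c) else 1 with hτdef
    have hττ : τ * τ = 1 := by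
      rw [hτdef]
      split
      · exact sg_mul_self w _
      · norm_num
    have hτ : fac A t c * Qp A w c = τ • (Qp A w c * fac A t c) := by
      by_cases h : t c = 1
      · simp only [fac, if_pos h, hτdef, if_pos h]
        exact A_pass h1 h2 w (show 2*c < 2*n by omega) c (by omega)
          (fun i hi => by omega)
      · simp [fac, if_neg h, hτdef]
    refine ⟨σ * τ, by rw [mul_mul_mul_comm, hσ, hττ, one_mul], ?_⟩
    show (Qp A t c * fac A t c)ᴴ * (Qp A u c * fac A u c) = _ • Qp A w (c+1)
    rw [conjTranspose_mul, fac_herm h1 h2 h3 t (by omega : c < n)]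
    rw [mul_assoc, ← mul_assoc ((Qp A t c)ᴴ), hQ, smul_mul_assoc, mul_smul_comm,
      ← mul_assoc, hτ, smul_mul_assoc, smul_smul, mul_assoc,
      fac_mul_fac h1 h2 h3 t u (by omega : c < n)]
    rfl

lemma Bop_sq {j : ℕ} (hj : j < n) : Bop A j * Bop A j = 1 := by
  have e1 : A (2*j+1) * A (2*j) = -(A (2*j) * A (2*j+1)) :=
    h2 _ _ (by omega) (by omega) (by omega)
  have e2 : A (2*j) * A (2*j) = 1 := h1 _ (by omega)
  have e3 : A (2*j+1) * A (2*j+1) = 1 := h1 _ (by omega)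
  unfold Bop
  rw [smul_mul_assoc, mul_smul_comm, smul_smul, Complex.I_mul_I]
  rw [mul_assoc, ← mul_assoc (A (2*j+1)), e1, neg_mul, mul_neg,
    mul_assoc (A (2*j)) (A (2*j+1)), e3, mul_one, e2]
  simp

lemma A_Bop_comm {k i : ℕ} (hk : k < 2*n) (hi : i < n) (hk1 : k ≠ 2*i)
    (hk2 : k ≠ 2*i+1) : A k * Bop A i = Bop A i * A k := by
  have e1 : A k * A (2*i) = -(A (2*i) * A k) := h2 _ _ hk (by omega) hk1
  have e2 : A k * A (2*i+1) = -(A (2*i+1) * A k) := h2 _ _ hk (by omega) hk2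
  unfold Bop
  rw [mul_smul_comm, smul_mul_assoc]
  congr 1
  rw [← mul_assoc, e1, neg_mul, mul_assoc, e2, mul_neg, neg_neg, mul_assoc]

lemma A_Bop_self {j : ℕ} (hj : j < n) :
    A (2*j) * Bop A j * A (2*j) = -(Bop A j) := by
  have e1 : A (2*j+1) * A (2*j) = -(A (2*j) * A (2*j+1)) :=
    h2 _ _ (by omega) (by omega) (by omega)
  have e2 : A (2*j) * A (2*j) = 1 := h1 _ (by omega)
  unfold Bop
  rw [mul_smul_comm, smul_mul_assoc, ← mul_assoc, e2, one_mul, e1, smul_neg]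

lemma Bop_comm {i j : ℕ} (hi : i < n) (hj : j < n) :
    Bop A i * Bop A j = Bop A j * Bop A i := by
  by_cases h : i = j
  · rw [h]
  · have e1 : A (2*j) * Bop A i = Bop A i * A (2*j) :=
      A_Bop_comm h1 h2 h3 (by omega) hi (by omega) (by omega)
    have e2 : A (2*j+1) * Bop A i = Bop A i * A (2*j+1) :=
      A_Bop_comm h1 h2 h3 (by omega) hi (by omega) (by omega)
    show Bop A i * (Complex.I • (A (2*j) * A (2*j+1))) = _
    rw [mul_smul_comm]
    conv_lhs => rw [← mul_assoc, ← e1, mul_assoc, ← e2, ← mul_assoc]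
    rw [← smul_mul_assoc]
    rfl

lemma Bop_herm {j : ℕ} (hj : j < n) : (Bop A j)ᴴ = Bop A j := by
  have e1 : A (2*j+1) * A (2*j) = -(A (2*j) * A (2*j+1)) :=
    h2 _ _ (by omega) (by omega) (by omega)
  unfold Bop
  rw [conjTranspose_smul, conjTranspose_mul, h3 _ (by omega), h3 _ (by omega), e1]
  simp

lemma R_Bop {j : ℕ} (hj : j < n) :
    ((2:ℂ)⁻¹ • (1 - Bop A j)) * Bop A j = -((2:ℂ)⁻¹ • (1 - Bop A j)) := by
  rw [smul_mul_assoc, sub_mul, one_mul, Bop_sq h1 h2 h3 hj]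
  rw [show Bop A j - 1 = -(1 - Bop A j) from (neg_sub _ _).symm, smul_neg]

lemma comm_R {X : Matrix (Fin m → ZMod 2) (Fin m → ZMod 2) ℂ} {i : ℕ}
    (h : X * Bop A i = Bop A i * X) :
    X * ((2:ℂ)⁻¹ • (1 - Bop A i)) = ((2:ℂ)⁻¹ • (1 - Bop A i)) * X := by
  rw [mul_smul_comm, smul_mul_assoc, mul_sub, sub_mul, mul_one, one_mul, h]

lemma A_Pr_comm {j : ℕ} (hj : j < n) :
    ∀ c, c ≤ j → A (2*j) * Pr A c = Pr A c * A (2*j) := by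
  intro c
  induction c with
  | zero => intro _; simp [Pr]
  | succ c ih =>
    intro hc
    show A (2*j) * (Pr A c * _) = Pr A c * _ * A (2*j)
    rw [← mul_assoc, ih (by omega), mul_assoc, mul_assoc]
    congr 1
    exact comm_R h1 h2 h3
      (A_Bop_comm h1 h2 h3 (k := 2*j) (i := c) (by omega) (by omega) (by omega)
        (by omega))

lemma Bop_Pr_comm {j : ℕ} (hj : j < n) :
    ∀ c, c ≤ n → Bop A j * Pr A c = Pr A c * Bop A j := by
  intro c
  induction c with
  | zero => intro _; simp [Pr]
  | succ c ih =>
    intro hc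
    show Bop A j * (Pr A c * _) = Pr A c * _ * Bop A j
    rw [← mul_assoc, ih (by omega), mul_assoc, mul_assoc]
    congr 1
    exact comm_R h1 h2 h3 (Bop_comm h1 h2 h3 (i := j) (j := c) hj (by omega))

lemma Pr_Bop {j : ℕ} (hj : j < n) :
    ∀ c, j < c → c ≤ n → Pr A c * Bop A j = -(Pr A c) := by
  intro c hjc hcn
  induction c, hjc using Nat.le_induction with
  | base =>
    show Pr A j * _ * Bop A j = -(Pr A j * _)
    rw [mul_assoc, R_Bop h1 h2 h3 hj, mul_neg]
  | succ c hc ih =>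
    show Pr A c * _ * Bop A j = -(Pr A c * _)
    rw [mul_assoc, ← comm_R h1 h2 h3 (Bop_comm h1 h2 h3 (i := j) (j := c) hj (by omega)),
      ← mul_assoc, ih (by omega), neg_mul]

lemma trace_Pr_Bop {c : ℕ} (hc : c < n) : (Pr A c * Bop A c).trace = 0 := by
  have hA : A (2*c) * Pr A c = Pr A c * A (2*c) := A_Pr_comm h1 h2 h3 hc c le_rfl
  have key : A (2*c) * (Pr A c * Bop A c) * A (2*c) = -(Pr A c * Bop A c) := by
    rw [← mul_assoc, hA, mul_assoc (Pr A c), mul_assoc (Pr A c),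
      A_Bop_self h1 h2 h3 hc, mul_neg]
  have tr1 : (A (2*c) * (Pr A c * Bop A c) * A (2*c)).trace
      = (Pr A c * Bop A c).trace := by
    rw [Matrix.trace_mul_comm, ← mul_assoc, h1 _ (by omega), one_mul]
  have h0 : (Pr A c * Bop A c).trace = -(Pr A c * Bop A c).trace := by
    conv_lhs => rw [← tr1, key, Matrix.trace_neg]
  linear_combination h0 / 2

lemma trace_Pr : ∀ c, c ≤ n → (Pr A c).trace = (2:ℂ)^m * ((2:ℂ)⁻¹)^c := by
  intro c
  induction c with
  | zero =>
    intro _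
    show (1 : Matrix (Fin m → ZMod 2) (Fin m → ZMod 2) ℂ).trace = _
    rw [Matrix.trace_one]
    simp [Fintype.card_fun]
  | succ c ih =>
    intro hc
    show (Pr A c * ((2:ℂ)⁻¹ • (1 - Bop A c))).trace = _
    rw [mul_smul_comm, Matrix.trace_smul, mul_sub, Matrix.trace_sub, mul_one,
      trace_Pr_Bop h1 h2 h3 (by omega), ih (by omega)]
    rw [smul_eq_mul]
    ring


lemma exists_vac :
    ∃ v : (Fin m → ZMod 2) → ℂ, star v ⬝ᵥ v = 1 ∧ ∀ j, j < n → Bop A j *ᵥ v = -v := by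
  have htr : (Pr A n).trace ≠ 0 := by
    rw [trace_Pr h1 h2 h3 n le_rfl]
    exact mul_ne_zero (pow_ne_zero _ two_ne_zero)
      (pow_ne_zero _ (inv_ne_zero two_ne_zero))
  have hdiag : ∃ f, Pr A n f f ≠ 0 := by
    by_contra hcon
    push_neg at hcon
    apply htr
    rw [Matrix.trace]
    apply Finset.sum_eq_zero
    intro f _
    exact hcon f
  obtain ⟨f, hf⟩ := hdiag
  set u : (Fin m → ZMod 2) → ℂ := (Pr A n) *ᵥ Pi.single f 1 with hu
  have huval : ∀ g, u g = Pr A n g f := by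
    intro g
    simp [hu, Matrix.mulVec_single]
  have hBu : ∀ j, j < n → Bop A j *ᵥ u = -u := by
    intro j hj
    rw [hu, Matrix.mulVec_mulVec, Bop_Pr_comm h1 h2 h3 hj n le_rfl,
      Pr_Bop h1 h2 h3 hj n hj le_rfl, Matrix.neg_mulVec]
  set ρ : ℝ := ∑ g, Complex.normSq (u g) with hρ
  have hρpos : 0 < ρ := by
    apply Finset.sum_pos' (fun g _ => Complex.normSq_nonneg _)
    exact ⟨f, Finset.mem_univ f, Complex.normSq_pos.mpr (by rw [huval]; exact hf)⟩
  have hsnz : Real.sqrt ρ ≠ 0 := ne_of_gt (Real.sqrt_pos.mpr hρpos)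
  refine ⟨((Real.sqrt ρ : ℂ))⁻¹ • u, ?_, ?_⟩
  · rw [star_smul, smul_dotProduct, dotProduct_smul]
    have hdu : star u ⬝ᵥ u = (ρ : ℂ) := by
      rw [dotProduct, hρ]
      push_cast
      apply Finset.sum_congr rfl
      intro g _
      rw [Pi.star_apply, Complex.normSq_eq_conj_mul_self]
      rfl
    rw [hdu]
    rw [star_inv₀, RCLike.star_def, Complex.conj_ofReal]
    rw [smul_eq_mul, smul_eq_mul, ← Complex.ofReal_inv, ← Complex.ofReal_mul,
      ← Complex.ofReal_mul]
    norm_cast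
    field_simp
    rw [Real.sq_sqrt hρpos.le]
  · intro j hj
    rw [Matrix.mulVec_smul, hBu j hj, smul_neg]

/-- from `B_j v = -v` derive `A_{2j+1} v = i A_{2j} v`. -/
lemma vac_odd (v : (Fin m → ZMod 2) → ℂ) {j : ℕ} (hj : j < n)
    (hBv : Bop A j *ᵥ v = -v) :
    A (2*j+1) *ᵥ v = Complex.I • (A (2*j) *ᵥ v) := by
  have hx : (A (2*j) * A (2*j+1)) *ᵥ v = Complex.I • v := by
    have h0 : Complex.I • ((A (2*j) * A (2*j+1)) *ᵥ v) = -v := by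
      rw [← Matrix.smul_mulVec]
      exact hBv
    have := congrArg (fun x => (-Complex.I) • x) h0
    simpa [smul_smul, Complex.I_mul_I] using this
  have hA : A (2*j+1) = A (2*j) * (A (2*j) * A (2*j+1)) := by
    rw [← mul_assoc, h1 _ (by omega), one_mul]
  rw [hA, ← Matrix.mulVec_mulVec, hx, Matrix.mulVec_smul]

/-- orthogonality: `⟨v, Q_w v⟩ = 0` for nontrivial monomials. -/
lemma vac_orth (v : (Fin m → ZMod 2) → ℂ) (hv : ∀ j, j < n → Bop A j *ᵥ v = -v)
    (w : ℕ → ZMod 2) {j : ℕ} (hj : j < n) (hwj : w j = 1) :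
    star v ⬝ᵥ (Qp A w n *ᵥ v) = 0 := by
  have hodd := A_pass h1 h2 w (show 2*j+1 < 2*n by omega) n le_rfl
    (fun i hi => by omega)
  have hleft := A_flip_left h1 h2 w hj n hj le_rfl
  have hright := A_flip_right h1 h2 w hj n hj le_rfl
  have hsq := sg_mul_self w (Finset.range j)
  have hscal : Complex.I * sg w (Finset.range n) * sg w (Finset.range j) =
      -(Complex.I * sg w (Finset.Ico (j+1) n)) := by
    rw [sg_split w (show j+1 ≤ n by omega), sg_succ, hwj, if_pos rfl]
    linear_combination (-(Complex.I * sg w (Finset.Ico (j+1) n))) * hsq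
  have hBQ : Bop A j * Qp A w n = -(Qp A w n * Bop A j) := by
    have lhs1 : Bop A j * Qp A w n =
        (Complex.I * sg w (Finset.range n) * sg w (Finset.range j)) •
          (Qp A (flipv j w) n * A (2*j+1)) := by
      show (Complex.I • (A (2*j) * A (2*j+1))) * Qp A w n = _
      rw [smul_mul_assoc, mul_assoc, hodd, mul_smul_comm, ← mul_assoc, hleft,
        smul_mul_assoc, smul_smul, smul_smul]
    have lhs2 : Qp A w n * Bop A j =
        (Complex.I * sg w (Finset.Ico (j+1) n)) • (Qp A (flipv j w) n * A (2*j+1)) := by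
      show Qp A w n * (Complex.I • (A (2*j) * A (2*j+1))) = _
      rw [mul_smul_comm, ← mul_assoc, hright, smul_mul_assoc, smul_smul]
    rw [lhs1, lhs2, hscal, neg_smul]
  have hvv : v = -(Bop A j *ᵥ v) := by rw [hv j hj, neg_neg]
  have hstarv : star v ᵥ* Bop A j = -(star v) := by
    rw [← Bop_herm h1 h2 h3 hj, ← Matrix.star_mulVec, hv j hj, star_neg]
  have step : Qp A w n *ᵥ v = Bop A j *ᵥ (Qp A w n *ᵥ v) := by
    conv_lhs => rw [hvv]
    rw [Matrix.mulVec_neg, Matrix.mulVec_mulVec,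
      show Qp A w n * Bop A j = -(Bop A j * Qp A w n) by rw [hBQ, neg_neg],
      Matrix.neg_mulVec, neg_neg, ← Matrix.mulVec_mulVec]
  have key : star v ⬝ᵥ (Qp A w n *ᵥ v) = -(star v ⬝ᵥ (Qp A w n *ᵥ v)) := by
    conv_lhs => rw [step]
    rw [Matrix.dotProduct_mulVec, hstarv, neg_dotProduct]
  linear_combination key / 2

end

section GammaLemmas

lemma X_diag (a : ZMod 2) : X a a = 0 := by fin_cases a <;> simp [X]
lemma Y_diag (a : ZMod 2) : Y a a = 0 := by fin_cases a <;> simp [Y]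
lemma Z_diag (a : ZMod 2) : Z a a = if a = 1 then -1 else 1 := by
  by_cases ha : a = 1
  · rw [if_pos ha, ha]; simp [Z]; rfl
  · have h0 : a = 0 := by revert a; decide
    rw [if_neg ha, h0]; simp [Z]; rfl
lemma Z_off {a b : ZMod 2} (h : a ≠ b) : Z a b = 0 := by
  fin_cases a <;> fin_cases b <;> simp_all [Z] <;> exact h rfl
lemma X_off (a : ZMod 2) : X (a+1) a = 1 := by
  fin_cases a <;>
    simp [X, show ((0:ZMod 2)+1) = 1 from rfl, show ((1:ZMod 2)+1) = 0 from rfl] <;> rfl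
lemma Y_off (a : ZMod 2) : Y (a+1) a = Complex.I * (if a = 1 then -1 else 1) := by
  fin_cases a <;>
    simp [Y, show ((0:ZMod 2)+1) = 1 from rfl, show ((1:ZMod 2)+1) = 0 from rfl] <;> rfl

/-- extension of `s : Fin n → ZMod 2` to `ℕ` by zero. -/
def esv {n : ℕ} (s : Fin n → ZMod 2) : ℕ → ZMod 2 :=
  fun i => if h : i < n then s ⟨i, h⟩ else 0

lemma esv_coe {n : ℕ} (s : Fin n → ZMod 2) (i : Fin n) : esv s i = s i := by
  simp [esv]

lemma esv_update {n : ℕ} (s : Fin n → ZMod 2) {j : ℕ} (hj : j < n) :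
    esv (Function.update s ⟨j, hj⟩ (s ⟨j, hj⟩ + 1)) = flipv j (esv s) := by
  funext i
  by_cases h : i < n
  · by_cases hij : i = j
    · subst hij
      simp [esv, flipv, h]
    · have h1 : (⟨i, h⟩ : Fin n) ≠ ⟨j, hj⟩ := by simp [Fin.ext_iff, hij]
      simp [esv, flipv, h, Function.update_of_ne h1, Function.update_of_ne hij]
  · have hij : i ≠ j := by omega
    simp [esv, flipv, h, Function.update_of_ne hij]

lemma gamma_apply {n k : ℕ} (t s : Fin n → ZMod 2) :
    gamma n k t s = ∏ i : Fin n,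
      (if (i : ℕ) < k / 2 then Z
        else if (i : ℕ) = k / 2 then (if k % 2 = 0 then X else Y) else 1) (t i) (s i) :=
  rfl

lemma gamma_ne {n k : ℕ} (hk : k / 2 < n) (s t : Fin n → ZMod 2)
    (hne : t ≠ Function.update s ⟨k/2, hk⟩ (s ⟨k/2, hk⟩ + 1)) :
    gamma n k t s = 0 := by
  obtain ⟨i0, hi0⟩ := Function.ne_iff.mp hne
  rw [gamma_apply]
  apply Finset.prod_eq_zero (Finset.mem_univ i0)
  by_cases h : i0 = (⟨k/2, hk⟩ : Fin n)
  · subst h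
    rw [Function.update_self] at hi0
    have hts : t ⟨k/2, hk⟩ = s ⟨k/2, hk⟩ := by
      have hzz : ∀ a b : ZMod 2, a ≠ b + 1 → a = b := by decide
      exact hzz _ _ hi0
    show (if ((⟨k/2, hk⟩ : Fin n) : ℕ) < k / 2 then Z
      else if ((⟨k/2, hk⟩ : Fin n) : ℕ) = k / 2 then (if k % 2 = 0 then X else Y) else 1)
        (t ⟨k/2, hk⟩) (s ⟨k/2, hk⟩) = 0
    rw [if_neg (by simp), if_pos rfl, hts]
    split
    · exact X_diag _
    · exact Y_diag _
  · rw [Function.update_of_ne h] at hi0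
    have hne2 : (i0 : ℕ) ≠ k/2 := fun hh => h (Fin.ext hh)
    show (if ((i0 : Fin n) : ℕ) < k / 2 then Z
      else if ((i0 : Fin n) : ℕ) = k / 2 then (if k % 2 = 0 then X else Y) else 1)
        (t i0) (s i0) = 0
    by_cases hlt : (i0 : ℕ) < k/2
    · rw [if_pos hlt]
      exact Z_off hi0
    · rw [if_neg hlt, if_neg hne2]
      exact Matrix.one_apply_ne hi0

lemma gamma_eq {n k : ℕ} (hk : k / 2 < n) (s : Fin n → ZMod 2) :
    gamma n k (Function.update s ⟨k/2, hk⟩ (s ⟨k/2, hk⟩ + 1)) s =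
      sg (esv s) (Finset.range (k/2)) *
        (if k % 2 = 0 then 1 else Complex.I * (if s ⟨k/2, hk⟩ = 1 then -1 else 1)) := by
  set jF : Fin n := ⟨k/2, hk⟩ with hjF
  set t : Fin n → ZMod 2 := Function.update s jF (s jF + 1) with ht
  rw [gamma_apply, ← Finset.mul_prod_erase _ _ (Finset.mem_univ jF)]
  beta_reduce
  have hfjF : (if ((jF : Fin n) : ℕ) < k / 2 then Z
      else if ((jF : Fin n) : ℕ) = k / 2 then (if k % 2 = 0 then X else Y) else 1)
        (t jF) (s jF) =
      (if k % 2 = 0 then 1 else Complex.I * (if s jF = 1 then -1 else 1)) := by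
    have hlt : ¬ ((jF : ℕ) < k/2) := by simp [hjF]
    have heq : (jF : ℕ) = k/2 := rfl
    rw [if_neg hlt, if_pos heq, ht, Function.update_self]
    split
    · exact X_off _
    · exact Y_off _
  have herase : (∏ i ∈ Finset.univ.erase jF,
      (if ((i : Fin n) : ℕ) < k / 2 then Z
        else if ((i : Fin n) : ℕ) = k / 2 then (if k % 2 = 0 then X else Y) else 1)
        (t i) (s i)) = sg (esv s) (Finset.range (k/2)) := by
    have step1 : ∀ i ∈ Finset.univ.erase jF,
        (if ((i : Fin n) : ℕ) < k / 2 then Z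
          else if ((i : Fin n) : ℕ) = k / 2 then (if k % 2 = 0 then X else Y) else 1)
          (t i) (s i)
        = (if (i : ℕ) < k/2 then (if s i = 1 then (-1:ℂ) else 1) else 1) := by
      intro i hi
      have hij : i ≠ jF := Finset.ne_of_mem_erase hi
      have hts : t i = s i := by rw [ht, Function.update_of_ne hij]
      have hne2 : (i : ℕ) ≠ k/2 := fun hh => hij (Fin.ext hh)
      by_cases hlt : (i : ℕ) < k/2
      · rw [if_pos hlt, if_pos hlt, hts, Z_diag]
      · rw [if_neg hlt, if_neg hlt, if_neg hne2, hts, Matrix.one_apply_eq]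
    rw [Finset.prod_congr rfl step1]
    have hjF1 : (if ((jF : Fin n) : ℕ) < k/2 then (if s jF = 1 then (-1:ℂ) else 1) else 1)
        = 1 := by
      have : ¬ ((jF : ℕ) < k/2) := by simp [hjF]
      rw [if_neg this]
    rw [Finset.prod_erase (f := fun i : Fin n =>
      if (i:ℕ) < k/2 then (if s i = 1 then (-1:ℂ) else 1) else 1) Finset.univ hjF1]
    have step2 : (∏ i : Fin n,
        (if (i : ℕ) < k/2 then (if s i = 1 then (-1:ℂ) else 1) else 1))
        = ∏ i ∈ Finset.range n,
            (if i < k/2 then (if esv s i = 1 then (-1:ℂ) else 1) else 1) := by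
      rw [← Fin.prod_univ_eq_prod_range
        (fun i => if i < k/2 then (if esv s i = 1 then (-1:ℂ) else 1) else 1) n]
      apply Finset.prod_congr rfl
      intro i _
      rw [esv_coe]
    rw [step2]
    rw [← Finset.prod_subset (Finset.range_subset_range.mpr (le_of_lt hk))
      (fun x _ hx => by rw [if_neg (by simpa using hx)])]
    unfold sg
    apply Finset.prod_congr rfl
    intro i hi
    rw [if_pos (Finset.mem_range.mp hi)]
  rw [hfjF, herase]
  ring

end GammaLemmas

end Aux

/-- any family `A_0, …, A_{2n−1}` of self-adjoint `2^m × 2^m` matrices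
(`1 ≤ n ≤ m`) satisfying the Majorana anticommutation relations is intertwined with the
`n`-qubit Jordan–Wigner Majorana operators `Γ_k` by a linear isometry
`V : ℂ^(2^n) → ℂ^(2^m)`: `V† V = I` and `A_k V = V Γ_k` for all `k < 2n`. -/
theorem majorana_family_unitarily_equivalent_to_jordan_wigner (n m : ℕ)
    (hn : 1 ≤ n) (hnm : n ≤ m)
    (A : ℕ → Matrix (Fin m → ZMod 2) (Fin m → ZMod 2) ℂ)
    (hsa : ∀ k, k < 2 * n → (A k)ᴴ = A k)
    (hrel : ∀ j k, j < 2 * n → k < 2 * n →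
      A j * A k + A k * A j =
        if j = k then (2 : ℂ) • (1 : Matrix (Fin m → ZMod 2) (Fin m → ZMod 2) ℂ) else 0) :
    ∃ V : Matrix (Fin m → ZMod 2) (Fin n → ZMod 2) ℂ,
      Vᴴ * V = 1 ∧ ∀ k, k < 2 * n → A k * V = V * gamma n k := by
  have h1 : ∀ j, j < 2*n → A j * A j = 1 := by
    intro j hj
    have h := hrel j j hj hj
    rw [if_pos rfl] at h
    have h' : (2:ℂ) • (A j * A j) = (2:ℂ) • (1 : Matrix (Fin m → ZMod 2) (Fin m → ZMod 2) ℂ) := by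
      rw [two_smul]; exact h
    exact smul_right_injective _ (by norm_num : (2:ℂ) ≠ 0) h'
  have h2 : ∀ j k, j < 2*n → k < 2*n → j ≠ k → A j * A k = -(A k * A j) := by
    intro j k hj hk hne
    have h := hrel j k hj hk
    rw [if_neg hne] at h
    exact eq_neg_of_add_eq_zero_left h
  obtain ⟨v, hv1, hv2⟩ := exists_vac h1 h2 hsa
  set V : Matrix (Fin m → ZMod 2) (Fin n → ZMod 2) ℂ :=
    Matrix.of (fun f s => (Qp A (esv s) n *ᵥ v) f) with hV
  have hcol : ∀ s t : Fin n → ZMod 2, (Vᴴ * V) s t =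
      star v ⬝ᵥ (((Qp A (esv s) n)ᴴ * Qp A (esv t) n) *ᵥ v) := by
    intro s t
    rw [← Matrix.mulVec_mulVec, Matrix.dotProduct_mulVec, ← Matrix.star_mulVec,
      Matrix.mul_apply]
    simp [hV, Matrix.conjTranspose_apply, dotProduct]
  refine ⟨V, ?_, ?_⟩
  · ext s t
    by_cases hst : s = t
    · subst hst
      rw [hcol, Qp_adj_mul_self h1 h2 hsa (esv s) n le_rfl, Matrix.one_mulVec, hv1,
        Matrix.one_apply_eq]
    · obtain ⟨σ, hσ, hQQ⟩ := Qp_adj_mul h1 h2 hsa (esv s) (esv t) n le_rfl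
      obtain ⟨i0, hi0⟩ := Function.ne_iff.mp hst
      have hw : (fun i => esv s i + esv t i) (i0 : ℕ) = 1 := by
        show esv s (i0 : ℕ) + esv t (i0 : ℕ) = 1
        rw [esv_coe, esv_coe]
        have hz : ∀ a b : ZMod 2, a ≠ b → a + b = 1 := by decide
        exact hz _ _ hi0
      rw [hcol, hQQ, Matrix.smul_mulVec, dotProduct_smul,
        vac_orth h1 h2 hsa v hv2 _ i0.isLt hw, smul_zero, Matrix.one_apply_ne hst]
  · intro k hk
    have hjn : k / 2 < n := by omega
    set jF : Fin n := ⟨k/2, hjn⟩ with hjF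
    ext f s
    have hlhs : (A k * V) f s = ((A k * Qp A (esv s) n) *ᵥ v) f := by
      rw [Matrix.mul_apply, ← Matrix.mulVec_mulVec]
      simp [hV, Matrix.mulVec, dotProduct]
    have hsum : (V * gamma n k) f s =
        V f (Function.update s jF (s jF + 1)) *
          gamma n k (Function.update s jF (s jF + 1)) s := by
      rw [Matrix.mul_apply]
      apply Finset.sum_eq_single
      · intro t _ htne
        rw [gamma_ne hjn s t htne, mul_zero]
      · intro habs
        exact absurd (Finset.mem_univ _) habs
    rw [hlhs, hsum, gamma_eq hjn s]
    have hesv : esv (Function.update s jF (s jF + 1)) = flipv (k/2) (esv s) :=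
      esv_update s hjn
    have hcoe : esv s (k/2) = s jF := esv_coe s jF
    by_cases hmod : k % 2 = 0
    · -- even case
      have hk2 : k = 2 * (k/2) := by omega
      have hA := A_flip_left h1 h2 (esv s) hjn n hjn le_rfl
      rw [if_pos hmod, mul_one]
      conv_lhs => rw [show A k = A (2*(k/2)) by rw [← hk2]]
      rw [hA, ← hesv, Matrix.smul_mulVec]
      simp only [Pi.smul_apply, smul_eq_mul, hV, Matrix.of_apply]
      ring
    · -- odd case
      have hmod1 : k % 2 = 1 := by omega
      have hk2 : k = 2*(k/2) + 1 := by omega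
      rw [if_neg hmod]
      have hpass := A_pass h1 h2 (esv s) (show 2*(k/2)+1 < 2*n by omega) n le_rfl
        (fun i hi => by omega)
      have hrt := A_flip_right h1 h2 (esv s) hjn n hjn le_rfl
      have hodd := vac_odd h1 h2 hsa v hjn (hv2 _ hjn)
      conv_lhs => rw [show A k = A (2*(k/2)+1) by rw [← hk2]]
      rw [hpass, Matrix.smul_mulVec, ← Matrix.mulVec_mulVec, hodd,
        Matrix.mulVec_smul, Matrix.mulVec_mulVec, hrt, Matrix.smul_mulVec,
        ← hesv]
      simp only [Pi.smul_apply, smul_eq_mul, hV, Matrix.of_apply]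
      have hsq := sg_mul_self (esv s) (Finset.Ico (k/2+1) n)
      have h_eq : sg (esv s) (Finset.range n) =
          sg (esv s) (Finset.range (k/2)) * (if s jF = 1 then (-1:ℂ) else 1) *
            sg (esv s) (Finset.Ico (k/2+1) n) := by
        rw [sg_split (esv s) (show k/2+1 ≤ n by omega), sg_succ, hcoe]
      set Qf := (Qp A (esv (Function.update s jF (s jF + 1))) n *ᵥ v) f with hQf
      set sgj := sg (esv s) (Finset.range (k/2)) with hsgj
      set sgIco := sg (esv s) (Finset.Ico (k/2+1) n) with hsgIco
      set ε : ℂ := if s jF = 1 then (-1:ℂ) else 1 with hε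
      linear_combination (Complex.I * sgIco * Qf) * h_eq +
        (sgj * ε * Complex.I * Qf) * hsq

end FQ
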